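/- If a sequence S of reversals and transpositions contains more than one complete reversal, then there exists a sequence S′ with the same overall effect on every permutation (the composition of the operations is equal) such that S′ contains at most one complete reversal, and if S′ contains a complete reversal then it is the last operation of S′. -/

import Mathlib

/-- The signed reversal ρ̄(i,j): replaces `p_i … p_j` by `-p_j … -p_i`. -/
def applySR (p : ℕ → ℤ) (i j : ℕ) : ℕ → ℤ := fun l =>
  if i ≤ l ∧ l ≤ j then -p (i + j - l) else p l

/-- The transposition τ(i,j,k): the result is
`(p₁ … p_{i-1} p_j … p_{k-1} p_i … p_{j-1} p_k … p_n)`. -/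
def applyT (p : ℕ → ℤ) (i j k : ℕ) : ℕ → ℤ := fun l =>
  if l < i ∨ k ≤ l then p l
  else if l < i + (k - j) then p (l + (j - i))
  else p (l - (k - j))

/-- An operation on signed permutations: a signed reversal or a transposition. -/
inductive ROp where
  | rev (i j : ℕ)
  | transp (i j k : ℕ)

/-- Validity of the indices of an operation on a permutation of size `n`. -/
def ROp.Valid (n : ℕ) : ROp → Prop
  | .rev i j => 1 ≤ i ∧ i ≤ j ∧ j ≤ n
  | .transp i j k => 1 ≤ i ∧ i < j ∧ j < k ∧ k ≤ n + 1

/-- Applying an operation. -/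
def ROp.apply : ROp → (ℕ → ℤ) → (ℕ → ℤ)
  | .rev i j, p => applySR p i j
  | .transp i j k, p => applyT p i j k

/-- Whether an operation is the complete reversal ρ̄(1,n). -/
def ROp.isComplete (n : ℕ) : ROp → Bool
  | .rev i j => i = 1 ∧ j = n
  | .transp _ _ _ => false


/-- The complete reversal as a function. -/
def cR (n : ℕ) (p : ℕ → ℤ) : ℕ → ℤ := applySR p 1 n

/-- Mirror of an operation under conjugation by the complete reversal. -/
def mirror (n : ℕ) : ROp → ROp
  | .rev i j => .rev (n + 1 - j) (n + 1 - i)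
  | .transp i j k => .transp (n + 2 - k) (n + 2 - j) (n + 2 - i)

lemma mirror_valid {n : ℕ} {op : ROp} (h : op.Valid n) : (mirror n op).Valid n := by
  cases op <;> simp [mirror, ROp.Valid] at * <;> omega

lemma mirror_complete {n : ℕ} {op : ROp} (h : op.Valid n) :
    (mirror n op).isComplete n = op.isComplete n := by
  cases op with
  | rev i j =>
    simp only [ROp.Valid] at h
    simp only [mirror, ROp.isComplete, decide_eq_decide]
    omega
  | transp i j k => rfl

lemma cR_cR (n : ℕ) (p : ℕ → ℤ) : cR n (cR n p) = p := by
  funext l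
  simp only [cR, applySR]
  split_ifs <;> first | rfl | (exfalso; omega) | (rw [neg_neg]; congr 1; omega)

lemma conj_apply {n : ℕ} {op : ROp} (h : op.Valid n) (p : ℕ → ℤ) :
    op.apply (cR n p) = cR n ((mirror n op).apply p) := by
  cases op with
  | rev i j =>
    obtain ⟨h1, h2, h3⟩ := h
    funext l
    simp only [ROp.apply, mirror, cR, applySR]
    split_ifs <;>
      (try simp only [neg_neg, neg_inj]) <;>
      first
        | rfl
        | (exfalso; omega)
        | (congr 1; omega)
  | transp i j k =>
    obtain ⟨h1, h2, h3, h4⟩ := h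
    funext l
    simp only [ROp.apply, mirror, cR, applySR, applyT]
    split_ifs <;>
      (try simp only [neg_neg, neg_inj]) <;>
      first
        | rfl
        | (exfalso; omega)
        | (congr 1; omega)

lemma conj_list {n : ℕ} (L : List ROp) (hv : ∀ op ∈ L, op.Valid n) (p : ℕ → ℤ) :
    L.foldl (fun q op => op.apply q) (cR n p) =
      cR n ((L.map (mirror n)).foldl (fun q op => op.apply q) p) := by
  induction L generalizing p with
  | nil => rfl
  | cons op L ih =>
    simp only [List.foldl_cons, List.map_cons]
    rw [conj_apply (hv op List.mem_cons_self) p,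
      ih (fun o ho => hv o (List.mem_cons_of_mem _ ho))]

lemma main_norm {n : ℕ} (S : List ROp) (hv : ∀ op ∈ S, op.Valid n) :
    ∃ (T : List ROp) (b : Bool),
      (∀ op ∈ T, op.Valid n) ∧
      (∀ op ∈ T, op.isComplete n = false) ∧
      ∀ p, S.foldl (fun q op => op.apply q) p =
        if b then cR n (T.foldl (fun q op => op.apply q) p)
        else T.foldl (fun q op => op.apply q) p := by
  induction S with
  | nil => exact ⟨[], false, by simp, by simp, fun p => rfl⟩
  | cons op S ih =>
    obtain ⟨T, b, hTv, hTc, hT⟩ := ih (fun o ho => hv o (List.mem_cons_of_mem _ ho))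
    have hopv : op.Valid n := hv op List.mem_cons_self
    by_cases hc : op.isComplete n = true
    · -- op is the complete reversal
      have hop : op = .rev 1 n := by
        cases op with
        | rev i j =>
          simp only [ROp.isComplete, decide_eq_true_eq] at hc
          rw [hc.1, hc.2]
        | transp i j k => simp [ROp.isComplete] at hc
      have happ : ∀ p, op.apply p = cR n p := by
        intro p; rw [hop]; rfl
      refine ⟨T.map (mirror n), !b, ?_, ?_, ?_⟩
      · intro o ho
        obtain ⟨o', ho', rfl⟩ := List.mem_map.mp ho
        exact mirror_valid (hTv o' ho')
      · intro o ho
        obtain ⟨o', ho', rfl⟩ := List.mem_map.mp ho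
        rw [mirror_complete (hTv o' ho')]
        exact hTc o' ho'
      · intro p
        rw [List.foldl_cons, happ, hT (cR n p), conj_list T hTv p]
        cases b with
        | false => simp
        | true => simp [cR_cR]
    · -- op is not complete
      refine ⟨op :: T, b, ?_, ?_, ?_⟩
      · intro o ho
        rcases List.mem_cons.mp ho with rfl | ho
        · exact hopv
        · exact hTv o ho
      · intro o ho
        rcases List.mem_cons.mp ho with rfl | ho
        · exact Bool.eq_false_iff.mpr hc
        · exact hTc o ho
      · intro p
        rw [List.foldl_cons, List.foldl_cons]
        exact hT (op.apply p)

theorem stmt19 (n : ℕ) (S : List ROp) (hvalid : ∀ op ∈ S, op.Valid n)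
    (hmany : 1 < (S.filter (ROp.isComplete n)).length) :
    ∃ S' : List ROp,
      (∀ op ∈ S', op.Valid n) ∧
      (∀ p : ℕ → ℤ, S'.foldl (fun q op => op.apply q) p =
        S.foldl (fun q op => op.apply q) p) ∧
      (S'.filter (ROp.isComplete n)).length ≤ 1 ∧
      (∀ op ∈ S'.dropLast, ¬ (ROp.isComplete n op = true)) := by
  -- from hmany, S contains a complete operation, so 1 ≤ n
  have hn : 1 ≤ n := by
    have hne : S.filter (ROp.isComplete n) ≠ [] := by
      intro h; rw [h] at hmany; simp at hmany
    obtain ⟨op, hopmem⟩ := List.exists_mem_of_ne_nil _ hne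
    have h1 := List.mem_filter.mp hopmem
    have h2 := hvalid op h1.1
    cases op with
    | rev i j =>
      simp only [ROp.isComplete, decide_eq_true_eq] at h1
      simp only [ROp.Valid] at h2
      omega
    | transp i j k => simp [ROp.isComplete] at h1
  obtain ⟨T, b, hTv, hTc, hT⟩ := main_norm S hvalid
  have hTfilter : T.filter (ROp.isComplete n) = [] :=
    List.filter_eq_nil_iff.mpr (fun a ha => by simp [hTc a ha])
  cases b with
  | false =>
    refine ⟨T, hTv, fun p => (hT p).symm, by simp [hTfilter], ?_⟩
    intro op hop
    have : op ∈ T := (List.dropLast_sublist (l := T)).subset hop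
    simp [hTc op this]
  | true =>
    refine ⟨T ++ [.rev 1 n], ?_, ?_, ?_, ?_⟩
    · intro o ho
      rcases List.mem_append.mp ho with ho | ho
      · exact hTv o ho
      · simp only [List.mem_singleton] at ho
        subst ho
        exact ⟨le_refl _, hn, le_refl _⟩
    · intro p
      rw [hT p, List.foldl_append]
      rfl
    · simp [List.filter_append, hTfilter, ROp.isComplete]
    · intro op hop
      rw [List.dropLast_concat] at hop
      simp [hTc op hop]
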